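/- Let 𝔄 be a unital C*-algebra and φ : 𝔄 → 𝔄 a unital *-endomorphism such that for every unitary u ∈ 𝔄 there exists χ_u ∈ 𝕋 with φ(u) = χ_u · u. Then φ is the identity map on 𝔄. -/

import Mathlib

open NormedSpace Complex

/-- A unital *-endomorphism `φ` of a unital C*-algebra that multiplies every unitary by
a scalar of modulus one (`φ(u) = χ_u · u`) is the identity. -/
theorem stmt10 (A : Type*) [NormedRing A] [StarRing A] [CStarRing A]
    [NormedAlgebra ℂ A] [CompleteSpace A] [StarModule ℂ A]
    (φ : A →⋆ₐ[ℂ] A)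
    (hφ : ∀ u : A, u ∈ unitary A → ∃ χ : ℂ, ‖χ‖ = 1 ∧ φ u = χ • u) :
    ∀ a : A, φ a = a := by
  letI : CStarAlgebra A :=
    { ‹NormedRing A›, ‹StarRing A›, ‹CStarRing A›, ‹NormedAlgebra ℂ A›, ‹StarModule ℂ A›,
      ‹CompleteSpace A› with }
  letI : NormedAlgebra ℚ A := NormedAlgebra.restrictScalars ℚ ℂ A
  have hcont : Continuous φ :=
    AddMonoidHomClass.continuous_of_bound φ 1
      (fun a => by simpa using NonUnitalStarAlgHom.norm_apply_le φ a)
  have hsm : ∀ (t : ℝ) (z : A), φ (t • z) = t • φ z := fun t z => by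
    rw [← algebraMap_smul ℂ t z, map_smul, algebraMap_smul]
  -- step 1: self-adjoint elements are moved by a scalar multiple of the identity
  have key : ∀ a : A, IsSelfAdjoint a → ∃ c : ℂ, φ a = a + c • (1 : A) := by
    intro a ha
    set x : A := Complex.I • a with hxdef
    set y : A := Complex.I • φ a with hydef
    have hx : x ∈ skewAdjoint A := ha.smul_mem_skewAdjoint conj_I
    have hskew : ∀ t : ℝ, t • x ∈ skewAdjoint A := fun t => by
      rw [skewAdjoint.mem_iff] at hx ⊢
      rw [star_smul, hx, star_trivial, smul_neg]
    have hunit : ∀ t : ℝ, NormedSpace.exp (t • x) ∈ unitary A := fun t =>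
      exp_mem_unitary_of_mem_skewAdjoint (hskew t)
    have hφx : φ x = y := by rw [hxdef, map_smul, hydef]
    have hmap : ∀ t : ℝ, φ (NormedSpace.exp (t • x)) = NormedSpace.exp (t • y) := fun t => by
      rw [map_exp φ hcont, hsm, hφx]
    set S : Submodule ℂ A := ℂ ∙ (1 : A) with hS
    have hSclosed : IsClosed (S : Set A) := S.closed_of_finiteDimensional
    have hmem : ∀ t : ℝ, NormedSpace.exp (t • y) * NormedSpace.exp (t • (-x)) ∈ S := by
      intro t
      obtain ⟨χ, -, hχ⟩ := hφ _ (hunit t)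
      rw [hmap t] at hχ
      rw [hχ, smul_mul_assoc]
      have h1 : NormedSpace.exp (t • x) * NormedSpace.exp (t • (-x)) = 1 := by
        rw [smul_neg, ← exp_add_of_commute (Commute.refl (t • x)).neg_right,
          add_neg_cancel, NormedSpace.exp_zero]
      rw [h1]
      exact Submodule.mem_span_singleton.mpr ⟨χ, rfl⟩
    have h1 : HasDerivAt (fun t : ℝ => NormedSpace.exp (t • y)) (NormedSpace.exp ((0:ℝ) • y) * y) 0 :=
      hasDerivAt_exp_smul_const y (0:ℝ)
    have h2 : HasDerivAt (fun t : ℝ => NormedSpace.exp (t • (-x))) (NormedSpace.exp ((0:ℝ) • (-x)) * (-x)) 0 :=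
      hasDerivAt_exp_smul_const (-x) (0:ℝ)
    have hG := h1.mul h2
    simp only [zero_smul, NormedSpace.exp_zero, one_mul, mul_one] at hG
    have hd : y - x ∈ S := by
      have hslope := hasDerivAt_iff_tendsto_slope.mp hG
      have hmem' : ∀ᶠ t in nhdsWithin (0:ℝ) {(0:ℝ)}ᶜ,
          slope (fun t : ℝ => NormedSpace.exp (t • y) * NormedSpace.exp (t • (-x))) 0 t ∈ S := by
        filter_upwards with t
        unfold slope
        exact S.smul_of_tower_mem _ (S.sub_mem (hmem t) (hmem 0))
      have hfin := hSclosed.mem_of_tendsto hslope hmem'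
      simpa [sub_eq_add_neg] using hfin
    obtain ⟨c, hc⟩ := Submodule.mem_span_singleton.mp hd
    refine ⟨(-Complex.I) * c, ?_⟩
    have hIc : Complex.I • (φ a - a) = c • (1:A) := by
      rw [smul_sub, ← hydef, ← hxdef, hc]
    have h3 : φ a - a = ((-Complex.I) * c) • (1:A) := by
      have h4 := congrArg (fun z => (-Complex.I) • z) hIc
      simpa [smul_smul, neg_mul, Complex.I_mul_I] using h4
    rw [← h3]; abel
  -- step 2: self-adjoint elements are fixed
  have hsa : ∀ a : A, IsSelfAdjoint a → φ a = a := by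
    intro a ha
    obtain ⟨c, hc⟩ := key a ha
    have haa : IsSelfAdjoint (a * a) := by
      nth_rewrite 1 [← ha.star_eq]; exact IsSelfAdjoint.star_mul_self a
    obtain ⟨d, hd⟩ := key (a * a) haa
    have hmul : φ (a * a) = φ a * φ a := map_mul φ a a
    rw [hc, hd] at hmul
    have hexp : (a + c • 1) * (a + c • 1)
        = a * a + (2 * c) • a + (c * c) • (1:A) := by
      simp only [mul_add, add_mul, smul_add, smul_mul_assoc, mul_smul_comm, one_mul, mul_one,
        smul_smul, two_mul, add_smul]
      abel
    rw [hexp] at hmul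
    have h4 : d • (1:A) = (2*c) • a + (c*c) • 1 := by
      rw [add_assoc] at hmul; exact add_left_cancel hmul
    have h3 : (2*c) • a = (d - c*c) • (1:A) := by
      rw [sub_smul, h4]; abel
    have hc0 : c • (1:A) = 0 := by
      by_cases h : c = 0
      · simp [h]
      · have h2c : (2 * c) ≠ 0 := by simpa using h
        have haval : a = ((2*c)⁻¹ * (d - c*c)) • (1:A) := by
          have h5 := congrArg (fun z => (2*c)⁻¹ • z) h3
          simp only [smul_smul, inv_mul_cancel₀ h2c, one_smul] at h5
          exact h5
        have h6 : φ a = a := by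
          rw [haval, map_smul, map_one]
        rw [hc] at h6
        nth_rewrite 2 [← add_zero a] at h6
        exact add_left_cancel h6
    rw [hc, hc0, add_zero]
  -- step 3: general elements
  intro a
  have hIh : Complex.I * ((2:ℂ)⁻¹ * Complex.I) = -(2:ℂ)⁻¹ := by
    rw [mul_comm ((2:ℂ)⁻¹) Complex.I, ← mul_assoc, Complex.I_mul_I]; ring
  have hsplit : a = (2:ℂ)⁻¹ • (a + star a)
      + Complex.I • (((2:ℂ)⁻¹ * Complex.I) • (star a - a)) := by
    rw [smul_smul, hIh]
    module
  have h1 : IsSelfAdjoint ((2:ℂ)⁻¹ • (a + star a)) := by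
    have hr : IsSelfAdjoint ((2:ℂ)⁻¹) := by
      rw [IsSelfAdjoint, Complex.star_def, Complex.ext_iff]; simp
    have hx : IsSelfAdjoint (a + star a) := by
      rw [IsSelfAdjoint, star_add, star_star, add_comm]
    exact hr.smul hx
  have h2 : IsSelfAdjoint (((2:ℂ)⁻¹ * Complex.I) • (star a - a)) := by
    rw [IsSelfAdjoint, star_smul, star_sub, star_star]
    rw [show star ((2:ℂ)⁻¹ * Complex.I) = -((2:ℂ)⁻¹ * Complex.I) by
      rw [Complex.star_def, Complex.ext_iff]; simp]
    module
  calc φ a = φ ((2:ℂ)⁻¹ • (a + star a))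
      + Complex.I • φ (((2:ℂ)⁻¹ * Complex.I) • (star a - a)) := by
        rw [← map_smul, ← map_add, ← hsplit]
    _ = a := by rw [hsa _ h1, hsa _ h2, ← hsplit]
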